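/- For all integers n ≥ 3, n cos(π/n) − (n−1) cos(π/(n−1)) > 1. -/

import Mathlib

open Real

lemma key_ineq (t : ℝ) (ht0 : 0 < t) (ht : t < π / 2) : 1 < cos t + t * sin t := by
  rcases le_or_gt t 1 with h1 | h1
  · have hs : t - t ^ 3 / 4 < sin t := by linarith [Real.sin_gt_sub_cube ht0, pow_pos ht0 3]
    have hc : 1 - t ^ 2 / 2 ≤ cos t := Real.one_sub_sq_div_two_le_cos
    nlinarith [mul_lt_mul_of_pos_left hs ht0, mul_nonneg (mul_nonneg ht0.le ht0.le) (by nlinarith : (0:ℝ) ≤ 1 - t ^ 2), pow_pos ht0 4]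
  · have hpi : t < π := lt_trans ht (by linarith [Real.pi_pos])
    have hsin : 0 < sin t := Real.sin_pos_of_pos_of_lt_pi ht0 hpi
    have hcos : 0 ≤ cos t := Real.cos_nonneg_of_mem_Icc ⟨by linarith [Real.pi_pos], ht.le⟩
    have hsin1 : sin t ≤ 1 := Real.sin_le_one t
    have hcos1 : cos t ≤ 1 := Real.cos_le_one t
    have hpyth : sin t ^ 2 + cos t ^ 2 = 1 := Real.sin_sq_add_cos_sq t
    nlinarith [mul_pos (by linarith : (0:ℝ) < t - 1) hsin,
      mul_nonneg hsin.le (by linarith : 0 ≤ 1 - sin t),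
      mul_nonneg hcos (by linarith : 0 ≤ 1 - cos t)]

lemma hasDeriv_g (x : ℝ) (hx : 0 < x) :
    HasDerivAt (fun y : ℝ => y * cos (π / y)) (cos (π / x) + π / x * sin (π / x)) x := by
  have hne : x ≠ 0 := ne_of_gt hx
  have h1 : HasDerivAt (fun y : ℝ => π / y) (-(π / x ^ 2)) x := by
    simpa [div_eq_mul_inv, mul_comm, mul_assoc, neg_mul, mul_neg] using
      (hasDerivAt_inv hne).const_mul π
  have h2 : HasDerivAt (fun y : ℝ => cos (π / y)) (-sin (π / x) * -(π / x ^ 2)) x :=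
    (Real.hasDerivAt_cos (π / x)).comp x h1
  have h3 : HasDerivAt (fun y : ℝ => y * cos (π / y)) (1 * cos (π / x) + x * (-sin (π / x) * -(π / x ^ 2))) x := (hasDerivAt_id' x).mul h2
  convert h3 using 1
  field_simp

theorem forward_difference_gt_one (n : ℕ) (hn : 3 ≤ n) :
    (n : ℝ) * cos (π / n) - ((n : ℝ) - 1) * cos (π / ((n : ℝ) - 1)) > 1 := by
  have hn' : (3 : ℝ) ≤ n := by exact_mod_cast hn
  set a : ℝ := (n : ℝ) - 1 with ha
  set b : ℝ := (n : ℝ) with hb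
  have hab : a < b := by simp [ha, hb]
  have ha2 : (2 : ℝ) ≤ a := by simp [ha]; linarith
  have hpos : ∀ x ∈ Set.Icc a b, 0 < x := fun x hx => by
    have := hx.1; linarith
  set g : ℝ → ℝ := fun y => y * cos (π / y) with hg
  have hderiv : ∀ x ∈ Set.Ioo a b,
      HasDerivAt g (cos (π / x) + π / x * sin (π / x)) x := fun x hx =>
    hasDeriv_g x (by have := hx.1; linarith)
  have hcont : ContinuousOn g (Set.Icc a b) := fun x hx =>
    ((hasDeriv_g x (hpos x hx)).continuousAt).continuousWithinAt
  obtain ⟨c, hc, hceq⟩ := exists_hasDerivAt_eq_slope g _ hab hcont hderiv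
  have hba : b - a = 1 := by simp [ha, hb]
  have hc0 : 0 < c := hpos c (Set.mem_Icc_of_Ioo hc)
  have hc2 : 2 < c := by have := hc.1; linarith
  have ht0 : 0 < π / c := div_pos Real.pi_pos hc0
  have ht : π / c < π / 2 := by
    apply div_lt_div_of_pos_left Real.pi_pos (by norm_num) hc2
  have hkey := key_ineq (π / c) ht0 ht
  have : g b - g a = cos (π / c) + π / c * sin (π / c) := by
    rw [hceq, hba, div_one]
  have hgt : 1 < g b - g a := by rw [this]; linarith
  simpa [hg, ha, hb] using hgt
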